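/- Let ρ(l) = l - 5al³ + 10a²l⁵ extended so that ρ' ≡ 1 for l ≥ 1/(2√a) and ρ' > 0 on (1/√(5a), 1/(2√a)) with ρ ≤ l throughout. Then sup_{s ≥ 0} (s - ρ(s)) < 1/(3√a). -/

import Mathlib

/-- For `ρ` equal to `l - 5al³ + 10a²l⁵` on `[0, 1/√(5a)]`, with `ρ' ∈ (0,1]`
on `(1/√(5a), 1/(2√a))`, `ρ' = 1` for `l ≥ 1/(2√a)`, and `ρ(l) ≤ l` for
`l ≥ 0`, one has `sup_{s ≥ 0} (s - ρ(s)) < 1/(3√a)`. -/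
theorem stmt15 (a : ℝ) (ha : 0 < a) (ρ : ℝ → ℝ)
    (hdiff : Differentiable ℝ ρ)
    (hpoly : ∀ l ∈ Set.Icc (0 : ℝ) (1 / Real.sqrt (5 * a)),
      ρ l = l - 5 * a * l ^ 3 + 10 * a ^ 2 * l ^ 5)
    (hmid : ∀ l ∈ Set.Ioo (1 / Real.sqrt (5 * a)) (1 / (2 * Real.sqrt a)),
      0 < deriv ρ l ∧ deriv ρ l ≤ 1)
    (hflat : ∀ l : ℝ, 1 / (2 * Real.sqrt a) ≤ l → deriv ρ l = 1)
    (hle : ∀ l : ℝ, 0 ≤ l → ρ l ≤ l) :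
    ∀ s : ℝ, 0 ≤ s → s - ρ s < 1 / (3 * Real.sqrt a) := by
  intro s hs
  have ht0 : 0 < Real.sqrt a := Real.sqrt_pos.mpr ha
  have hu0 : (0:ℝ) < Real.sqrt 5 := Real.sqrt_pos.mpr (by norm_num)
  have hu2 : Real.sqrt 5 ^ 2 = 5 := Real.sq_sqrt (by norm_num)
  have h5a : Real.sqrt (5*a) = Real.sqrt 5 * Real.sqrt a :=
    Real.sqrt_mul (by norm_num) a
  set t := Real.sqrt a with ht
  set c := 1 / Real.sqrt (5*a) with hcdef
  set b := 1 / (2 * t) with hbdef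
  have hc0 : 0 < c := by rw [hcdef, h5a]; positivity
  have hb0 : 0 < b := by rw [hbdef]; positivity
  have hcb : c < b := by
    rw [hcdef, hbdef, h5a, div_lt_div_iff₀ (by positivity) (by positivity)]
    nlinarith
  have hc2 : c ^ 2 = 1 / (5 * a) := by
    rw [hcdef, div_pow, one_pow, Real.sq_sqrt (by positivity)]
  set g : ℝ → ℝ := fun x => x - ρ x with hgdef
  have hgd : Differentiable ℝ g := differentiable_id.sub hdiff
  have hderivg : ∀ x : ℝ, deriv g x = 1 - deriv ρ x := by
    intro x
    rw [hgdef, deriv_fun_sub (f := fun y => y) differentiableAt_id (hdiff x), deriv_id'']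
  -- derivative on the polynomial region
  have hpd : ∀ x ∈ Set.Ioo (0:ℝ) c, deriv ρ x = 1 - 15*a*x^2 + 50*a^2*x^4 := by
    intro x hx
    have hev : ρ =ᶠ[nhds x] (fun l => l - 5*a*l^3 + 10*a^2*l^5) := by
      filter_upwards [Ioo_mem_nhds hx.1 hx.2] with y hy
      exact hpoly y ⟨hy.1.le, hy.2.le⟩
    rw [hev.deriv_eq]
    have h3 : HasDerivAt (fun l : ℝ => l^3) (3*x^2) x := by
      simpa using hasDerivAt_pow 3 x
    have h5 : HasDerivAt (fun l : ℝ => l^5) (5*x^4) x := by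
      simpa using hasDerivAt_pow 5 x
    have h : HasDerivAt (fun l : ℝ => l - 5*a*l^3 + 10*a^2*l^5)
        (1 - 15*a*x^2 + 50*a^2*x^4) x := by
      have := ((hasDerivAt_id x).sub (h3.const_mul (5*a))).add (h5.const_mul (10*a^2))
      exact this.congr_deriv (by ring)
    exact h.deriv
  -- g is monotone on [0, c]
  have hmono1 : MonotoneOn g (Set.Icc 0 c) := by
    apply monotoneOn_of_deriv_nonneg (convex_Icc 0 c) hgd.continuous.continuousOn
      (hgd.differentiableOn)
    intro x hx
    rw [interior_Icc] at hx
    rw [hderivg, hpd x hx]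
    have hx2 : x ^ 2 ≤ 1 / (5*a) := by nlinarith [hx.1, hx.2, hc2, hc0]
    have hax : a * x ^ 2 ≤ 1/5 := by
      rw [le_div_iff₀ (by positivity)] at hx2
      nlinarith
    nlinarith [mul_nonneg ha.le (sq_nonneg x), sq_nonneg (a*x^2)]
  -- g is monotone on [c, b]
  have hmono2 : MonotoneOn g (Set.Icc c b) := by
    apply monotoneOn_of_deriv_nonneg (convex_Icc c b) hgd.continuous.continuousOn
      (hgd.differentiableOn)
    intro x hx
    rw [interior_Icc] at hx
    rw [hderivg]
    have := (hmid x hx).2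
    linarith
  -- ρ is monotone on [c, b]
  have hmonoρ : MonotoneOn ρ (Set.Icc c b) := by
    apply monotoneOn_of_deriv_nonneg (convex_Icc c b) hdiff.continuous.continuousOn
      (hdiff.differentiableOn)
    intro x hx
    rw [interior_Icc] at hx
    exact (hmid x hx).1.le
  -- for s ≥ b, g is non-increasing
  have hgsb : ∀ x : ℝ, b ≤ x → g x ≤ g b := by
    intro x hbx
    have hanti : AntitoneOn g (Set.Icc b x) := by
      apply antitoneOn_of_deriv_nonpos (convex_Icc b x) hgd.continuous.continuousOn
        (hgd.differentiableOn)
      intro y hy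
      rw [interior_Icc] at hy
      rw [hderivg, hflat y hy.1.le]
      norm_num
    exact hanti ⟨le_rfl, hbx⟩ ⟨hbx, le_rfl⟩ hbx
  -- g s ≤ g b for all s ≥ 0
  have hgb : g s ≤ g b := by
    rcases le_total s b with hsb | hbs
    · rcases le_total s c with hsc | hcs
      · calc g s ≤ g c := hmono1 ⟨hs, hsc⟩ ⟨hc0.le, le_rfl⟩ hsc
          _ ≤ g b := hmono2 ⟨le_rfl, hcb.le⟩ ⟨hcb.le, le_rfl⟩ hcb.le
      · exact hmono2 ⟨hcs, hsb⟩ ⟨hcb.le, le_rfl⟩ hsb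
    · exact hgsb s hbs
  -- value of ρ at c
  have hρc : ρ c = 2/5 * c := by
    have h := hpoly c ⟨hc0.le, le_rfl⟩
    have hac : a * c ^ 2 = 1/5 := by
      rw [hc2]; field_simp
    rw [h]
    linear_combination (10*a*c^3 - 3*c) * hac
  have hρcb : ρ c ≤ ρ b := hmonoρ ⟨le_rfl, hcb.le⟩ ⟨hcb.le, le_rfl⟩ hcb.le
  have hfinal : b - 2/5 * c < 1 / (3 * t) := by
    rw [hbdef, hcdef, h5a]
    have h1 : (0:ℝ) < Real.sqrt 5 * t := by positivity
    field_simp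
    nlinarith [ht0, hu0, hu2, mul_pos hu0 ht0, sq_nonneg (Real.sqrt 5 - 12/5), mul_pos ht0 ht0]
  have : g b < 1 / (3 * t) := by
    have : g b ≤ b - 2/5 * c := by
      have : g b = b - ρ b := rfl
      rw [this, ← hρc]
      linarith
    linarith
  calc s - ρ s = g s := rfl
    _ ≤ g b := hgb
    _ < 1 / (3 * t) := this
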